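/- The limit E(1) = lim_{n→∞} σ^{q^n}/D_n satisfies E(1)^q = −x·E(1), and hence E(1)^{q−1} = −x (since E(1) ≠ 0, as |E(1)| = q^{−1/(q−1)}). -/

import Mathlib

lemma nonarch_norm_sub_eq {C : Type*} [NormedField C]
    (hna : IsNonarchimedean (‖·‖ : C → ℝ)) {a b : C} (h : ‖a‖ < ‖b‖) :
    ‖a - b‖ = ‖b‖ := by
  apply le_antisymm
  · calc ‖a - b‖ = ‖a + (-b)‖ := by ring_nf
    _ ≤ max ‖a‖ ‖-b‖ := hna a (-b)
    _ = max ‖a‖ ‖b‖ := by rw [norm_neg]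
    _ = ‖b‖ := max_eq_right h.le
  · have hb : ‖b‖ = ‖(a - b) + (-a)‖ := by rw [show (a-b) + (-a) = -b by ring, norm_neg]
    have h2 := hna (a - b) (-a)
    simp only [norm_neg] at h2
    rw [hb]
    rcases max_cases ‖a - b‖ ‖a‖ with ⟨he, _⟩ | ⟨he, _⟩
    · rw [he] at h2; exact h2
    · rw [he] at h2
      rw [← hb] at h2
      linarith

/-- the limit `E(1) = lim σ^{q^n}/D_n` satisfies `E(1)^q = -x E(1)`,
and hence (`E(1) ≠ 0`, since `|E(1)| = q^{-1/(q-1)}`) also `E(1)^{q-1} = -x`. -/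
theorem dwork_carlitz_special_value_eq {C : Type*} [NormedField C] [CompleteSpace C]
    (hna : IsNonarchimedean (‖·‖ : C → ℝ))
    (q : ℕ) (p m : ℕ) (hp : p.Prime) (hm : 0 < m) (hqpm : q = p ^ m) (hq : 1 < q)
    (x : C) (hx : ‖x‖ = (q : ℝ)⁻¹)
    (σ : C) (hσ : σ ^ (q - 1) = -x)
    (D : ℕ → C) (hD0 : D 0 = 1)
    (hD : ∀ n : ℕ, D (n + 1) = (x ^ q ^ (n + 1) - x) * (D n) ^ q)
    (E1 : C) (hE1 : Filter.Tendsto (fun n : ℕ => σ ^ q ^ n / D n) Filter.atTop (nhds E1)) :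
    E1 ^ q = -x * E1 ∧ ‖E1‖ = (q : ℝ) ^ (-(1 / ((q : ℝ) - 1))) ∧ E1 ≠ 0 ∧
      E1 ^ (q - 1) = -x := by
  set t : ℝ := (q : ℝ) with ht_def
  have ht1 : (1 : ℝ) < t := by rw [ht_def]; exact_mod_cast hq
  have ht0 : (0 : ℝ) < t := lt_trans one_pos ht1
  have htm1 : (0 : ℝ) < t - 1 := by linarith
  have hcast : ((q - 1 : ℕ) : ℝ) = t - 1 := by
    rw [Nat.cast_sub hq.le]; norm_num; exact ht_def.symm
  have hxlt : ‖x‖ < 1 := by rw [hx]; exact inv_lt_one_of_one_lt₀ ht1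
  have hx0 : (0:ℝ) < ‖x‖ := by rw [hx]; positivity
  -- norm of x^{q^{n+1}} - x  is ‖x‖
  have hbracket : ∀ n : ℕ, ‖x ^ q ^ (n + 1) - x‖ = ‖x‖ := by
    intro n
    apply nonarch_norm_sub_eq hna
    rw [norm_pow]
    calc ‖x‖ ^ q ^ (n+1) < ‖x‖ ^ 1 :=
          pow_lt_pow_right_of_lt_one₀ hx0 hxlt (Nat.one_lt_pow (Nat.succ_ne_zero n) hq)
    _ = ‖x‖ := pow_one _
  -- norm of σ
  have hnσ : ‖σ‖ = t ^ (-(1 / (t - 1)) : ℝ) := by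
    have h1 : ‖σ‖ ^ (q - 1) = t⁻¹ := by
      rw [← norm_pow, hσ, norm_neg, hx]
    have h2 : (t ^ (-(1 / (t - 1)) : ℝ)) ^ (q - 1) = t⁻¹ := by
      rw [← Real.rpow_natCast (t ^ (-(1 / (t - 1)) : ℝ)) (q - 1),
        ← Real.rpow_mul ht0.le, hcast]
      rw [show -(1 / (t - 1)) * (t - 1) = -1 by field_simp]
      exact Real.rpow_neg_one t
    have hinj := pow_left_strictMonoOn₀ (M₀ := ℝ) (n := q - 1)
      (Nat.sub_ne_zero_of_lt hq) |>.injOn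
    exact hinj (by simp [norm_nonneg]) (by
        simp only [Set.mem_setOf_eq]; positivity) (h1.trans h2.symm)
  -- norm of D n
  have hnD : ∀ n : ℕ, ‖D n‖ = t ^ (-((t ^ n - 1) / (t - 1)) : ℝ) := by
    intro n
    induction n with
    | zero => simp [hD0]
    | succ n ih =>
      rw [hD n, norm_mul, hbracket, hx, norm_pow, ih,
        ← Real.rpow_natCast (t ^ (-((t ^ n - 1) / (t - 1)) : ℝ)) q,
        ← Real.rpow_mul ht0.le,
        show (t : ℝ)⁻¹ = t ^ (-1 : ℝ) by rw [Real.rpow_neg_one],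
        ← Real.rpow_add ht0]
      congr 1
      have : ((q : ℕ) : ℝ) = t := rfl
      rw [this]
      field_simp
      ring
  -- constant norm of the sequence
  have hconst : ∀ n : ℕ, ‖σ ^ q ^ n / D n‖ = t ^ (-(1 / (t - 1)) : ℝ) := by
    intro n
    rw [norm_div, norm_pow, hnσ, hnD n,
      ← Real.rpow_natCast (t ^ (-(1 / (t - 1)) : ℝ)) (q ^ n),
      ← Real.rpow_mul ht0.le, ← Real.rpow_sub ht0]
    congr 1
    have : ((q ^ n : ℕ) : ℝ) = t ^ n := by push_cast [ht_def]; ring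
    rw [this]
    field_simp
    ring
  -- norm of E1
  have hnE1 : ‖E1‖ = t ^ (-(1 / (t - 1)) : ℝ) := by
    have h1 : Filter.Tendsto (fun n : ℕ => ‖σ ^ q ^ n / D n‖) Filter.atTop (nhds ‖E1‖) :=
      hE1.norm
    have h2 : Filter.Tendsto (fun n : ℕ => ‖σ ^ q ^ n / D n‖) Filter.atTop
        (nhds (t ^ (-(1 / (t - 1)) : ℝ))) := by
      simp only [hconst]
      exact tendsto_const_nhds
    exact tendsto_nhds_unique h1 h2
  have hE1ne : E1 ≠ 0 := by
    intro h
    rw [h, norm_zero] at hnE1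
    have : (0:ℝ) < t ^ (-(1 / (t - 1)) : ℝ) := Real.rpow_pos_of_pos ht0 _
    linarith [hnE1 ▸ this]
  -- the functional equation
  have hfe : E1 ^ q = -x * E1 := by
    have hDne : ∀ n, D n ≠ 0 := by
      intro n h
      have := hnD n
      rw [h, norm_zero] at this
      have : (0:ℝ) < t ^ (-((t ^ n - 1) / (t - 1)) : ℝ) := Real.rpow_pos_of_pos ht0 _
      linarith
    have hbne : ∀ n : ℕ, x ^ q ^ (n + 1) - x ≠ 0 := by
      intro n h
      have := hbracket n
      rw [h, norm_zero] at this
      linarith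
    have hseq : ∀ n : ℕ, (σ ^ q ^ n / D n) ^ q
        = (x ^ q ^ (n + 1) - x) * (σ ^ q ^ (n + 1) / D (n + 1)) := by
      intro n
      rw [hD n, div_pow, ← pow_mul, ← pow_succ,
        mul_comm (x ^ q ^ (n + 1) - x) ((D n) ^ q), ← div_div,
        mul_comm (x ^ q ^ (n + 1) - x) (σ ^ q ^ (n + 1) / D n ^ q / (x ^ q ^ (n + 1) - x)),
        div_mul_cancel₀ _ (hbne n)]
    have hL : Filter.Tendsto (fun n : ℕ => (σ ^ q ^ n / D n) ^ q) Filter.atTop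
        (nhds (E1 ^ q)) := hE1.pow q
    have hxpow : Filter.Tendsto (fun n : ℕ => x ^ q ^ (n + 1)) Filter.atTop (nhds 0) := by
      have h1 : Filter.Tendsto (fun k : ℕ => x ^ k) Filter.atTop (nhds 0) :=
        tendsto_pow_atTop_nhds_zero_of_norm_lt_one hxlt
      have h2 : Filter.Tendsto (fun n : ℕ => q ^ (n + 1)) Filter.atTop Filter.atTop := by
        apply Filter.Tendsto.comp (tendsto_pow_atTop_atTop_of_one_lt hq)
        exact Filter.tendsto_add_atTop_nat 1
      exact h1.comp h2
    have hR : Filter.Tendsto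
        (fun n : ℕ => (x ^ q ^ (n + 1) - x) * (σ ^ q ^ (n + 1) / D (n + 1)))
        Filter.atTop (nhds (-x * E1)) := by
      apply Filter.Tendsto.mul
      · have := hxpow.sub_const x
        simpa using this
      · exact hE1.comp (Filter.tendsto_add_atTop_nat 1)
    rw [show (fun n : ℕ => (σ ^ q ^ n / D n) ^ q)
        = fun n : ℕ => (x ^ q ^ (n + 1) - x) * (σ ^ q ^ (n + 1) / D (n + 1)) from
        funext hseq] at hL
    exact tendsto_nhds_unique hL hR
  refine ⟨hfe, hnE1, hE1ne, ?_⟩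
  have : E1 ^ (q - 1) * E1 = -x * E1 := by
    rw [← pow_succ, Nat.sub_add_cancel hq.le, hfe]
  exact mul_right_cancel₀ hE1ne this
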